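/- If Q is a minimal witness to a set Γ of k pairwise non-isomorphic posets each of size n, with k ≥ 2, then |Q| ≤ n(k−1) + 1. -/

import Mathlib

/-!
Formalization framework: finite posets are bundled as `FinPartOrd.{0}`, downsets are
`Finset`s of elements, unlabelled posets are isomorphism classes (`UPoset`), and a witness
of a set `Γ` of unlabelled posets at size `n` is a finite poset whose set of size-`n`
downsets, up to isomorphism, is exactly `Γ`.
-/

attribute [local instance] Classical.propDecidable

noncomputable section

open Finset

/-- `D` is a downset of the finite poset `Q`. -/
def IsDownset (Q : FinPartOrd.{0}) (D : Finset ↥Q) : Prop :=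
  ∀ ⦃a b : ↥Q⦄, a ∈ D → b ≤ a → b ∈ D

/-- The induced subposet of `Q` on a finset `D` of its elements. -/
def subposet (Q : FinPartOrd.{0}) (D : Finset ↥Q) : FinPartOrd.{0} :=
  FinPartOrd.of {x : ↥Q // x ∈ D}

/-- The isomorphism setoid on finite posets. -/
def isoSetoid : Setoid FinPartOrd.{0} where
  r P Q := Nonempty (↥P ≃o ↥Q)
  iseqv := ⟨fun _ => ⟨OrderIso.refl _⟩, fun ⟨e⟩ => ⟨e.symm⟩, fun ⟨e⟩ ⟨f⟩ => ⟨e.trans f⟩⟩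

/-- Unlabelled finite posets: isomorphism classes of finite posets. -/
def UPoset := Quotient isoSetoid

/-- The isomorphism class of a finite poset. -/
def cls (P : FinPartOrd.{0}) : UPoset := Quotient.mk isoSetoid P

/-- The number of elements of a finite poset. -/
def size (Q : FinPartOrd.{0}) : ℕ := Fintype.card ↥Q

/-- The size of an isomorphism class of finite posets. -/
def usize : UPoset → ℕ :=
  Quotient.lift size fun _ _ h => h.elim fun e => Fintype.card_congr e.toEquiv

/-- `D_n(Q)` : the set of downsets of `Q` of size `n`, up to isomorphism. -/
def DSet (n : ℕ) (Q : FinPartOrd.{0}) : Set UPoset :=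
  {c | ∃ D : Finset ↥Q, IsDownset Q D ∧ D.card = n ∧ cls (subposet Q D) = c}

/-- `d_n(Q)` : the number of isomorphism classes of downsets of `Q` of size `n`. -/
def dNum (n : ℕ) (Q : FinPartOrd.{0}) : ℕ := (DSet n Q).ncard

/-- `D(Q)` : the set of nonempty downsets of `Q`, up to isomorphism. -/
def DAllSet (Q : FinPartOrd.{0}) : Set UPoset :=
  {c | ∃ D : Finset ↥Q, IsDownset Q D ∧ D.Nonempty ∧ cls (subposet Q D) = c}

/-- `Q` is a witness of the set `Γ` of unlabelled posets (at size `n`): the set of size-`n`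
downsets of `Q`, up to isomorphism, is exactly `Γ`. -/
def IsWitness (n : ℕ) (Γ : Set UPoset) (Q : FinPartOrd.{0}) : Prop := DSet n Q = Γ

/-- `Q` is a minimal witness of `Γ` : `Q` is a witness and no proper downset of `Q` is
itself a witness of `Γ`. -/
def IsMinimalWitness (n : ℕ) (Γ : Set UPoset) (Q : FinPartOrd.{0}) : Prop :=
  IsWitness n Γ Q ∧
    ∀ D : Finset ↥Q, IsDownset Q D → D ≠ Finset.univ → ¬IsWitness n Γ (subposet Q D)

/-- The height of an element: the number of elements of a longest chain whose maximum is `x`. -/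
def heightEl (Q : FinPartOrd.{0}) (x : ↥Q) : ℕ :=
  sSup {k | ∃ c : Finset ↥Q, IsChain (· ≤ ·) (c : Set ↥Q) ∧ x ∈ c ∧ (∀ y ∈ c, y ≤ x) ∧ c.card = k}

/-- The height of a finite poset: the number of elements of a longest chain. -/
def posetHeight (Q : FinPartOrd.{0}) : ℕ :=
  sSup {k | ∃ c : Finset ↥Q, IsChain (· ≤ ·) (c : Set ↥Q) ∧ c.card = k}

/-- A finite poset is Newtonian if every element of level `i` covers every element of
level `i - 1`. -/
def Newtonian (Q : FinPartOrd.{0}) : Prop :=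
  ∀ x y : ↥Q, heightEl Q y = heightEl Q x + 1 → x ⋖ y

/-- A finite poset is connected if it is nonempty and any two elements are joined by a
comparability path. -/
def ConnectedPoset (Q : FinPartOrd.{0}) : Prop :=
  Nonempty ↥Q ∧ ∀ x y : ↥Q, Relation.ReflTransGen (fun a b : ↥Q => a ≤ b ∨ b ≤ a) x y

/-- `x` is a maximal element of the subset `W` of `Q`. -/
def IsMaxIn (Q : FinPartOrd.{0}) (W : Finset ↥Q) (x : ↥Q) : Prop :=
  x ∈ W ∧ ∀ y ∈ W, x ≤ y → y = x

/-- `x` is a maximal element of the finite poset `R`. -/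
def IsMaxEl (R : FinPartOrd.{0}) (x : ↥R) : Prop := ∀ y, x ≤ y → y = x

/-- A poset of type 𝒲 : the disjoint union of two connected Newtonian posets that are not
isomorphic, but which only differ in one maximal element (they become isomorphic after the
removal of a suitable maximal element from each). -/
def TypeW (P : FinPartOrd.{0}) : Prop :=
  ∃ W₁ W₂ : Finset ↥P,
    W₁ ∪ W₂ = Finset.univ ∧ Disjoint W₁ W₂ ∧
    (∀ x ∈ W₁, ∀ y ∈ W₂, ¬x ≤ y ∧ ¬y ≤ x) ∧
    ConnectedPoset (subposet P W₁) ∧ ConnectedPoset (subposet P W₂) ∧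
    Newtonian (subposet P W₁) ∧ Newtonian (subposet P W₂) ∧
    ¬Nonempty (↥(subposet P W₁) ≃o ↥(subposet P W₂)) ∧
    ∃ x y, IsMaxIn P W₁ x ∧ IsMaxIn P W₂ y ∧
      Nonempty (↥(subposet P (W₁.erase x)) ≃o ↥(subposet P (W₂.erase y)))

/-- An antichain on `i` elements. -/
def AntichainFin (i : ℕ) : Type := Fin i

instance (i : ℕ) : PartialOrder (AntichainFin i) where
  le x y := x = y
  le_refl _ := rfl
  le_trans a b c h₁ h₂ := show a = c from (show a = b from h₁).trans (show b = c from h₂)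
  le_antisymm _ _ h _ := h

instance (i : ℕ) : Fintype (AntichainFin i) := inferInstanceAs (Fintype (Fin i))
instance (i : ℕ) : Fintype (WithTop (AntichainFin i)) :=
  inferInstanceAs (Fintype (Option (Fin i)))

/-- `Λ_i`: the poset with `i` minimal elements and one maximal element above all of them. -/
def Lambda (i : ℕ) : FinPartOrd.{0} := FinPartOrd.of (WithTop (AntichainFin i))

/-- `k` disjoint copies of a poset `α`. -/
def Copies (k : ℕ) (α : Type) : Type := Fin k × α

instance (k : ℕ) (α : Type) [PartialOrder α] : PartialOrder (Copies k α) where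
  le x y := x.1 = y.1 ∧ x.2 ≤ y.2
  le_refl _ := ⟨rfl, le_refl _⟩
  le_trans _ _ _ h₁ h₂ := ⟨h₁.1.trans h₂.1, le_trans h₁.2 h₂.2⟩
  le_antisymm x y h₁ h₂ := by
    obtain ⟨x₁, x₂⟩ := x
    obtain ⟨y₁, y₂⟩ := y
    obtain ⟨h, h'⟩ := h₁
    cases h
    exact congrArg _ (le_antisymm h' h₂.2)

instance (k : ℕ) (α : Type) [Fintype α] : Fintype (Copies k α) :=
  inferInstanceAs (Fintype (Fin k × α))

/-- `H_ℓ`: the poset whose connected components are `ℓ` copies of `Λ₂` and one copy of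
`Λ_{3(ℓ-1)}`. -/
def Hposet (ℓ : ℕ) : FinPartOrd.{0} :=
  FinPartOrd.of (Copies ℓ (WithTop (AntichainFin 2)) ⊕ WithTop (AntichainFin (3 * (ℓ - 1))))

/-- The poset `P₀` placed above a chain of `i` elements. -/
def withChain (P₀ : FinPartOrd.{0}) (i : ℕ) : FinPartOrd.{0} :=
  FinPartOrd.of (Fin i ⊕ₗ ↥P₀)

/-- The disjoint union of two finite posets. -/
def disjSum (P R : FinPartOrd.{0}) : FinPartOrd.{0} := FinPartOrd.of (↥P ⊕ ↥R)

/-- The poset `P_iR_i`: the disjoint union of `P₀` and `R₀` each placed above a chain of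
`i` elements. -/
def PRposet (P₀ R₀ : FinPartOrd.{0}) (i : ℕ) : FinPartOrd.{0} :=
  disjSum (withChain P₀ i) (withChain R₀ i)

/-- `C(P₀R₀) = |D(P₀)| + |D(R₀)| − |D(P₀) ∩ D(R₀)|`. -/
def CNum (P₀ R₀ : FinPartOrd.{0}) : ℕ :=
  (DAllSet P₀).ncard + (DAllSet R₀).ncard - (DAllSet P₀ ∩ DAllSet R₀).ncard

/-- The vertices of the exchange graph: the downsets of `Q` of size `n`, as actual subsets. -/
def EGVert (n : ℕ) (Q : FinPartOrd.{0}) : Type :=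
  {D : Finset ↥Q // IsDownset Q D ∧ D.card = n}

/-- The exchange graph `G_n(Q)`: two size-`n` downsets are adjacent iff they differ by
exactly one element. -/
def ExchangeGraph (n : ℕ) (Q : FinPartOrd.{0}) : SimpleGraph (EGVert n Q) where
  Adj X Y := (X.1 \ Y.1).card = 1 ∧ (Y.1 \ X.1).card = 1
  symm := ⟨fun X Y h => ⟨h.2, h.1⟩⟩
  loopless := ⟨fun X h => by
    simp only [Finset.sdiff_self, Finset.card_empty] at h
    exact absurd h.1 (by simp)⟩

/-- The downset `D` of `Q`, viewed as a poset, is isomorphic (a "copy of") `P`. -/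
def IsoTo (Q : FinPartOrd.{0}) (D : Finset ↥Q) (P : FinPartOrd.{0}) : Prop :=
  Nonempty (↥(subposet Q D) ≃o ↥P)

/-- A path `A :: M ++ [C]` in the exchange graph `G_n(Q)` whose first vertex is a copy of
`Pa`, whose last vertex is a copy of `Pb`, and all of whose internal vertices are copies of
`Pmid`. -/
def SpecialPath (n : ℕ) (Q : FinPartOrd.{0}) (Pa Pmid Pb : FinPartOrd.{0})
    (A : EGVert n Q) (M : List (EGVert n Q)) (C : EGVert n Q) : Prop :=
  List.Chain' (ExchangeGraph n Q).Adj (A :: M ++ [C]) ∧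
    IsoTo Q A.1 Pa ∧ IsoTo Q C.1 Pb ∧ ∀ v ∈ M, IsoTo Q v.1 Pmid

/-- `T` is an antichain in `Q`. -/
def IsAntichainIn (Q : FinPartOrd.{0}) (T : Finset ↥Q) : Prop :=
  ∀ x ∈ T, ∀ y ∈ T, x ≤ y → x = y

/-- The possible shapes of `A \ X` and `C \ X`: an antichain possibly together with a single
element below all of it and/or a single element above all of it, or a two-element chain
together with one incomparable element. -/
def GoodForm (Q : FinPartOrd.{0}) (S : Finset ↥Q) : Prop :=
  (∃ T : Finset ↥Q, IsAntichainIn Q T ∧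
    (S = T ∨
      (∃ b, b ∉ T ∧ S = insert b T ∧ ∀ x ∈ T, b < x) ∨
      (∃ t, t ∉ T ∧ S = insert t T ∧ ∀ x ∈ T, x < t) ∨
      (∃ b t, b ∉ T ∧ t ∉ T ∧ b ≠ t ∧ S = insert b (insert t T) ∧
        (∀ x ∈ T, b < x) ∧ ∀ x ∈ T, x < t))) ∨
  (∃ x y z : ↥Q, S = {x, y, z} ∧ x ≠ y ∧ x ≠ z ∧ y ≠ z ∧ x < y ∧
    ¬x ≤ z ∧ ¬z ≤ x ∧ ¬y ≤ z ∧ ¬z ≤ y)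

namespace MWaux

lemma cls_eq_of_iso {P R : FinPartOrd.{0}} (e : ↥P ≃o ↥R) : cls P = cls R :=
  Quotient.sound ⟨e⟩

/-- Push a downset of a subposet back to the ambient poset. -/
def drop {Q : FinPartOrd.{0}} (U : Finset ↥Q) (D : Finset ↥(subposet Q U)) : Finset ↥Q :=
  D.map (Function.Embedding.subtype _)

lemma mem_drop {Q : FinPartOrd.{0}} {U : Finset ↥Q} {D : Finset ↥(subposet Q U)} {x : ↥Q} :
    x ∈ drop U D ↔ ∃ h : x ∈ U, (⟨x, h⟩ : {a : ↥Q // a ∈ U}) ∈ D := by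
  constructor
  · intro hx
    obtain ⟨a, ha, rfl⟩ := Finset.mem_map.1 hx
    exact ⟨a.2, ha⟩
  · rintro ⟨h, hm⟩
    exact Finset.mem_map.2 ⟨⟨x, h⟩, hm, rfl⟩

lemma drop_card {Q : FinPartOrd.{0}} (U : Finset ↥Q) (D : Finset ↥(subposet Q U)) :
    (drop U D).card = D.card := Finset.card_map _

lemma drop_subset {Q : FinPartOrd.{0}} (U : Finset ↥Q) (D : Finset ↥(subposet Q U)) :
    drop U D ⊆ U := fun x hx => (mem_drop.1 hx).1

/-- The order isomorphism between a downset of a subposet and its image in the ambient poset. -/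
def dropIso {Q : FinPartOrd.{0}} (U : Finset ↥Q) (D : Finset ↥(subposet Q U)) :
    ↥(subposet (subposet Q U) D) ≃o ↥(subposet Q (drop U D)) where
  toFun y := ⟨y.1.1, mem_drop.2 ⟨y.1.2, y.2⟩⟩
  invFun x := ⟨⟨x.1, (mem_drop.1 x.2).choose⟩, (mem_drop.1 x.2).choose_spec⟩
  left_inv y := Subtype.ext (Subtype.ext rfl)
  right_inv x := Subtype.ext rfl
  map_rel_iff' := Iff.rfl

lemma drop_downset {Q : FinPartOrd.{0}} {U : Finset ↥Q} (hU : IsDownset Q U)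
    {D : Finset ↥(subposet Q U)} (hD : IsDownset (subposet Q U) D) :
    IsDownset Q (drop U D) := by
  intro a b ha hba
  obtain ⟨haU, haD⟩ := mem_drop.1 ha
  have hbU : b ∈ U := hU haU hba
  have : (⟨b, hbU⟩ : {x : ↥Q // x ∈ U}) ≤ ⟨a, haU⟩ := hba
  exact mem_drop.2 ⟨hbU, hD haD this⟩

/-- Lift a downset of the ambient poset contained in `U` to a downset of the subposet. -/
def lift {Q : FinPartOrd.{0}} (U V : Finset ↥Q) : Finset ↥(subposet Q U) :=
  V.subtype (· ∈ U)

lemma drop_lift {Q : FinPartOrd.{0}} {U V : Finset ↥Q} (hVU : V ⊆ U) :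
    drop U (lift U V) = V := by
  ext x
  simp only [mem_drop]
  constructor
  · rintro ⟨h, hm⟩
    exact Finset.mem_subtype.1 hm
  · intro h
    exact ⟨hVU h, Finset.mem_subtype.2 h⟩

lemma lift_downset {Q : FinPartOrd.{0}} {U V : Finset ↥Q} (hV : IsDownset Q V) :
    IsDownset (subposet Q U) (lift U V) := by
  intro a b ha hba
  have ha' : a.1 ∈ V := Finset.mem_subtype.1 ha
  exact Finset.mem_subtype.2 (hV ha' hba)

lemma DSet_subposet {Q : FinPartOrd.{0}} {U : Finset ↥Q} (hU : IsDownset Q U) (n : ℕ) :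
    DSet n (subposet Q U) =
      {c | ∃ V : Finset ↥Q, IsDownset Q V ∧ V ⊆ U ∧ V.card = n ∧ cls (subposet Q V) = c} := by
  ext c
  constructor
  · rintro ⟨D, hD, hcard, rfl⟩
    exact ⟨drop U D, drop_downset hU hD, drop_subset U D, (drop_card U D).trans hcard,
      (cls_eq_of_iso (dropIso U D)).symm⟩
  · rintro ⟨V, hV, hVU, hcard, rfl⟩
    refine ⟨lift U V, lift_downset hV, ?_, ?_⟩
    · rw [← drop_card U (lift U V), drop_lift hVU]; exact hcard
    · rw [cls_eq_of_iso (dropIso U (lift U V)), drop_lift hVU]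

lemma downset_union {Q : FinPartOrd.{0}} {A B : Finset ↥Q} (hA : IsDownset Q A)
    (hB : IsDownset Q B) : IsDownset Q (A ∪ B) := by
  intro a b ha hba
  rcases Finset.mem_union.1 ha with h | h
  · exact Finset.mem_union_left _ (hA h hba)
  · exact Finset.mem_union_right _ (hB h hba)

lemma downset_biUnion {Q : FinPartOrd.{0}} {ι : Type*} [DecidableEq (↥Q)] (s : Finset ι)
    (f : ι → Finset ↥Q) (hf : ∀ i ∈ s, IsDownset Q (f i)) : IsDownset Q (s.biUnion f) := by
  intro a b ha hba
  obtain ⟨i, hi, hai⟩ := Finset.mem_biUnion.1 ha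
  exact Finset.mem_biUnion.2 ⟨i, hi, hf i hi hai hba⟩

/-- The exchange lemma: if two size-`n` downsets have different classes, then there is a pair
of size-`n` downsets of different classes whose union has at most `n + 1` elements. -/
lemma exchange (Q : FinPartOrd.{0}) (n : ℕ) :
    ∀ m : ℕ, ∀ X E : Finset ↥Q, (E \ X).card ≤ m →
    IsDownset Q X → IsDownset Q E → X.card = n → E.card = n →
    cls (subposet Q X) ≠ cls (subposet Q E) →
    ∃ A B : Finset ↥Q, IsDownset Q A ∧ IsDownset Q B ∧ A.card = n ∧ B.card = n ∧
      cls (subposet Q A) ≠ cls (subposet Q B) ∧ (A ∪ B).card ≤ n + 1 := by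
  intro m
  induction m with
  | zero =>
    intro X E hm hX hE hXc hEc hne
    have hsub : E ⊆ X := by
      intro x hx
      by_contra hxX
      have : x ∈ E \ X := Finset.mem_sdiff.2 ⟨hx, hxX⟩
      simp [Finset.card_eq_zero.1 (Nat.le_zero.1 hm)] at this
    have : E = X := Finset.eq_of_subset_of_card_le hsub (by omega)
    exact absurd (this ▸ rfl) hne.symm
  | succ m ih =>
    intro X E hm hX hE hXc hEc hne
    by_cases h1 : (E \ X).card ≤ 1
    · refine ⟨X, E, hX, hE, hXc, hEc, hne, ?_⟩
      have : X ∪ E = X ∪ (E \ X) := by rw [Finset.union_sdiff_self_eq_union]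
      rw [this, Finset.card_union_of_disjoint Finset.disjoint_sdiff]
      omega
    · push_neg at h1
      have hXEcard : (X \ E).card = (E \ X).card := Finset.card_sdiff_comm (by omega)
      have hXEne : (X \ E).Nonempty := Finset.card_pos.1 (by omega)
      obtain ⟨a, haXE, hamax⟩ : ∃ a ∈ X \ E, ∀ x' ∈ X \ E, ¬a < x' := by
        obtain ⟨a, ha⟩ := Finset.exists_maximal hXEne
        exact ⟨a, ha.1, fun x hx hlt => hlt.not_ge (ha.2 hx hlt.le)⟩
      have haX : a ∈ X := (Finset.mem_sdiff.1 haXE).1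
      have haE : a ∉ E := (Finset.mem_sdiff.1 haXE).2
      have hamaxX : ∀ c ∈ X, a ≤ c → c = a := by
        intro c hc hac
        by_contra hca
        have hlt : a < c := lt_of_le_of_ne hac (Ne.symm hca)
        have hcE : c ∉ E := fun hcE => haE (hE hcE hlt.le)
        exact hamax c (Finset.mem_sdiff.2 ⟨hc, hcE⟩) hlt
      obtain ⟨b, hbEX, hbmin⟩ : ∃ b ∈ E \ X, ∀ x' ∈ E \ X, ¬x' < b := by
        obtain ⟨b, hb⟩ := Finset.exists_minimal (Finset.card_pos.1 (by omega) : (E \ X).Nonempty)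
        exact ⟨b, hb.1, fun x hx hlt => hlt.not_ge (hb.2 hx hlt.le)⟩
      have hbE : b ∈ E := (Finset.mem_sdiff.1 hbEX).1
      have hbX : b ∉ X := (Finset.mem_sdiff.1 hbEX).2
      set X' : Finset ↥Q := insert b (X.erase a) with hX'def
      have hn1 : 1 ≤ n := by
        have := Finset.card_pos.2 ⟨a, haX⟩; omega
      have hbnot : b ∉ X.erase a := fun h => hbX (Finset.mem_of_mem_erase h)
      have hX'card : X'.card = n := by
        rw [hX'def, Finset.card_insert_of_notMem hbnot, Finset.card_erase_of_mem haX]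
        omega
      have hX'down : IsDownset Q X' := by
        intro p q hp hqp
        rcases Finset.mem_insert.1 hp with rfl | hp'
        · -- p = b
          have hqE : q ∈ E := hE hbE hqp
          by_cases hqb : q = p
          · exact hqb ▸ hp
          · have hqX : q ∈ X := by
              by_contra hqX
              exact hbmin q (Finset.mem_sdiff.2 ⟨hqE, hqX⟩) (lt_of_le_of_ne hqp hqb)
            have hqa : q ≠ a := fun h => haE (h ▸ hqE)
            exact Finset.mem_insert_of_mem (Finset.mem_erase.2 ⟨hqa, hqX⟩)
        · have hpX : p ∈ X := Finset.mem_of_mem_erase hp'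
          have hpa : p ≠ a := (Finset.mem_erase.1 hp').1
          have hqX : q ∈ X := hX hpX hqp
          have hqa : q ≠ a := by
            rintro rfl
            exact hpa (hamaxX p hpX hqp)
          exact Finset.mem_insert_of_mem (Finset.mem_erase.2 ⟨hqa, hqX⟩)
      have hEX' : E \ X' = (E \ X).erase b := by
        ext x
        simp only [hX'def, Finset.mem_sdiff, Finset.mem_insert, Finset.mem_erase]
        constructor
        · rintro ⟨hxE, hx⟩
          push_neg at hx
          have hxa : x ≠ a := fun h => haE (h ▸ hxE)
          exact ⟨hx.1, hxE, hx.2 hxa⟩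
        · rintro ⟨hxb, hxE, hxX⟩
          refine ⟨hxE, ?_⟩
          push_neg
          exact ⟨hxb, fun _ => hxX⟩
      have hEX'card : (E \ X').card ≤ m := by
        rw [hEX', Finset.card_erase_of_mem hbEX]; omega
      by_cases hcls : cls (subposet Q X') = cls (subposet Q X)
      · exact ih X' E hEX'card hX'down hE hX'card hEc (hcls.trans_ne hne)
      · refine ⟨X, X', hX, hX'down, hXc, hX'card, (Ne.symm hcls), ?_⟩
        have : X ∪ X' = insert b X := by
          ext x
          simp only [hX'def, Finset.mem_union, Finset.mem_insert, Finset.mem_erase]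
          constructor
          · rintro (h | h | ⟨_, h⟩) <;> tauto
          · rintro (rfl | h) <;> tauto
        rw [this, Finset.card_insert_of_notMem hbX]
        omega

end MWaux

/-- A minimal witness `Q` to a set of `k ≥ 2` pairwise non-isomorphic
posets of size `n` satisfies `|Q| ≤ n(k−1) + 1`. -/
theorem minimal_witness_bound_k2 (n k : ℕ) (hk : 2 ≤ k) (Γ : Set UPoset) (hΓfin : Γ.Finite)
    (hΓcard : Γ.ncard = k) (hΓsize : ∀ c ∈ Γ, usize c = n) (Q : FinPartOrd.{0})
    (hQ : IsMinimalWitness n Γ Q) :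
    size Q ≤ n * (k - 1) + 1 := by
  classical
  obtain ⟨hW', hmin'⟩ := hQ
  have hW : DSet n Q = Γ := hW'
  have hmin : ∀ D : Finset ↥Q, IsDownset Q D → D ≠ Finset.univ →
      ¬(DSet n (subposet Q D) = Γ) := fun D h1 h2 h3 => hmin' D h1 h2 h3

  classical
  have h2 : 1 < Γ.ncard := by omega
  obtain ⟨c₁, c₂, hc₁, hc₂, hcne⟩ := (Set.one_lt_ncard_iff hΓfin).1 h2
  have hc₁' : c₁ ∈ DSet n Q := by rw [hW]; exact hc₁
  have hc₂' : c₂ ∈ DSet n Q := by rw [hW]; exact hc₂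
  obtain ⟨X, hXd, hXc, hXcls⟩ := hc₁'
  obtain ⟨E, hEd, hEc, hEcls⟩ := hc₂'
  obtain ⟨A, B, hAd, hBd, hAc, hBc, hABne, hABcard⟩ :=
    MWaux.exchange Q n (E \ X).card X E le_rfl hXd hEd hXc hEc
      (by rw [hXcls, hEcls]; exact hcne)
  set cA := cls (subposet Q A) with hcAdef
  set cB := cls (subposet Q B) with hcBdef
  have hcA : cA ∈ Γ := by rw [← hW]; exact ⟨A, hAd, hAc, rfl⟩
  have hcB : cB ∈ Γ := by rw [← hW]; exact ⟨B, hBd, hBc, rfl⟩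
  have hrep : ∀ c : UPoset, ∃ V : Finset ↥Q,
      c ∈ Γ → IsDownset Q V ∧ V.card = n ∧ cls (subposet Q V) = c := by
    intro c
    by_cases h : c ∈ Γ
    · have : c ∈ DSet n Q := by rw [hW]; exact h
      obtain ⟨V, hV⟩ := this
      exact ⟨V, fun _ => hV⟩
    · exact ⟨∅, fun h' => absurd h' h⟩
  choose rep hrep using hrep
  set S := ((hΓfin.toFinset.erase cA).erase cB) with hS
  have hSΓ : ∀ c ∈ S, c ∈ Γ := fun c hc =>
    hΓfin.mem_toFinset.1 (Finset.mem_of_mem_erase (Finset.mem_of_mem_erase hc))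
  set U := A ∪ B ∪ S.biUnion rep with hU
  have hUd : IsDownset Q U :=
    MWaux.downset_union (MWaux.downset_union hAd hBd)
      (MWaux.downset_biUnion _ _ (fun c hc => (hrep c (hSΓ c hc)).1))
  have hwit : DSet n (subposet Q U) = Γ := by
    rw [MWaux.DSet_subposet hUd]
    ext c
    constructor
    · rintro ⟨V, hVd, _, hVc, rfl⟩
      rw [← hW]
      exact ⟨V, hVd, hVc, rfl⟩
    · intro hc
      by_cases h1 : c = cA
      · exact ⟨A, hAd, fun x hx =>
          Finset.mem_union_left _ (Finset.mem_union_left _ hx), hAc, h1.symm⟩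
      by_cases h2 : c = cB
      · exact ⟨B, hBd, fun x hx =>
          Finset.mem_union_left _ (Finset.mem_union_right _ hx), hBc, h2.symm⟩
      · have hcS : c ∈ S :=
          Finset.mem_erase.2 ⟨h2, Finset.mem_erase.2 ⟨h1, hΓfin.mem_toFinset.2 hc⟩⟩
        exact ⟨rep c, (hrep c hc).1,
          fun x hx => Finset.mem_union_right _ (Finset.mem_biUnion.2 ⟨c, hcS, hx⟩),
          (hrep c hc).2.1, (hrep c hc).2.2⟩
  have hUuniv : U = Finset.univ := by
    by_contra hne
    exact hmin U hUd hne hwit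
  have hScard : S.card = k - 2 := by
    rw [hS, Finset.card_erase_of_mem, Finset.card_erase_of_mem]
    · rw [← Set.ncard_eq_toFinset_card Γ hΓfin, hΓcard]
      omega
    · exact hΓfin.mem_toFinset.2 hcA
    · exact Finset.mem_erase.2 ⟨Ne.symm hABne, hΓfin.mem_toFinset.2 hcB⟩
  have hbi : (S.biUnion rep).card ≤ (k - 2) * n := by
    calc (S.biUnion rep).card ≤ ∑ c ∈ S, (rep c).card := Finset.card_biUnion_le
      _ = ∑ _c ∈ S, n := Finset.sum_congr rfl (fun c hc => (hrep c (hSΓ c hc)).2.1)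
      _ = S.card * n := by rw [Finset.sum_const, smul_eq_mul]
      _ = (k - 2) * n := by rw [hScard]
  have hUcard : U.card ≤ (n + 1) + (k - 2) * n := by
    calc U.card ≤ (A ∪ B).card + (S.biUnion rep).card := Finset.card_union_le _ _
      _ ≤ (n + 1) + (k - 2) * n := by omega
  have hsz : size Q = U.card := by
    rw [hUuniv]
    exact (Finset.card_univ).symm
  obtain ⟨j, rfl⟩ : ∃ j, k = j + 2 := ⟨k - 2, by omega⟩
  have key : n * (j + 2 - 1) + 1 = (n + 1) + (j + 2 - 2) * n := by
    rw [show j + 2 - 1 = j + 1 by omega, show j + 2 - 2 = j by omega]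
    ring
  rw [hsz, key]
  exact hUcard
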